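/- For all v₁, v₂ ∈ ℝᵐ it holds that ‖v₁ − v₂‖² ≤ h(v₁, v₂) ≤ q(‖v₁ − v₂‖), where h(u,v) := ⟨eᵘ, e^{−v}⟩ + ⟨e^{−u}, eᵛ⟩ − 2m, q(t) := 2(cosh(t) − 1), and ‖·‖ is the Euclidean norm. -/

import Mathlib

/-- The divergence `h(u,v) := ⟨eᵘ, e^{−v}⟩ + ⟨e^{−u}, eᵛ⟩ − 2m`. -/
noncomputable def diverg {m : ℕ} (u v : Fin m → ℝ) : ℝ :=
  (∑ i, Real.exp (u i) * Real.exp (-v i)) + (∑ i, Real.exp (-u i) * Real.exp (v i))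
    - 2 * m

/-- The Euclidean norm of a vector in `ℝᵐ`. -/
noncomputable def enormR {m : ℕ} (d : Fin m → ℝ) : ℝ := Real.sqrt (∑ i, d i ^ 2)

lemma hasSum_cosh_sub_one (x : ℝ) :
    HasSum (fun n => x ^ (2 * (n + 1)) / (Nat.factorial (2 * (n + 1)) : ℝ)) (Real.cosh x - 1) := by
  have h := Real.hasSum_cosh x
  rw [← hasSum_nat_add_iff' 1] at h
  simpa using h

lemma sq_div_two_le_cosh_sub_one (t : ℝ) : t ^ 2 / 2 ≤ Real.cosh t - 1 := by
  have h := hasSum_cosh_sub_one t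
  have h0 := sum_le_hasSum {0} (fun n _ => div_nonneg ((even_two_mul (n + 1)).pow_nonneg t) (Nat.cast_nonneg _)) h
  norm_num [Nat.factorial] at h0
  linarith

/-- for all `v₁, v₂ ∈ ℝᵐ`,
`‖v₁ − v₂‖² ≤ h(v₁, v₂) ≤ q(‖v₁ − v₂‖)` with `q(t) := 2(cosh(t) − 1)`
(Euclidean norm). -/
theorem stmt_13 {m : ℕ} (v₁ v₂ : Fin m → ℝ) :
    enormR (v₁ - v₂) ^ 2 ≤ diverg v₁ v₂ ∧
    diverg v₁ v₂ ≤ 2 * (Real.cosh (enormR (v₁ - v₂)) - 1) := by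
  set d : Fin m → ℝ := v₁ - v₂ with hd
  have hdi : ∀ i, d i = v₁ i - v₂ i := fun i => rfl
  -- diverg as a sum of 2 (cosh (d i) - 1)
  have key : ∀ x : Fin m, 2 * (Real.cosh (d x) - 1)
      = Real.exp (v₁ x) * Real.exp (-v₂ x) + Real.exp (-v₁ x) * Real.exp (v₂ x) - 2 := by
    intro x
    have h1 : Real.exp (v₁ x - v₂ x) = Real.exp (v₁ x) * Real.exp (-v₂ x) := by
      rw [← Real.exp_add]; ring_nf
    have h2 : Real.exp (-(v₁ x - v₂ x)) = Real.exp (-v₁ x) * Real.exp (v₂ x) := by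
      rw [← Real.exp_add]; ring_nf
    rw [Real.cosh_eq, hdi x, h1, h2]; ring
  have hdiv : diverg v₁ v₂ = ∑ i, 2 * (Real.cosh (d i) - 1) := by
    calc diverg v₁ v₂
        = ∑ i, (Real.exp (v₁ i) * Real.exp (-v₂ i) + Real.exp (-v₁ i) * Real.exp (v₂ i) - 2) := by
          simp [diverg, Finset.sum_sub_distrib, Finset.sum_add_distrib, mul_comm]
      _ = ∑ i, 2 * (Real.cosh (d i) - 1) := Finset.sum_congr rfl fun x _ => (key x).symm
  set S : ℝ := ∑ i, d i ^ 2 with hS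
  have hS0 : (0:ℝ) ≤ S := Finset.sum_nonneg fun i _ => sq_nonneg _
  have hnorm : enormR (v₁ - v₂) = Real.sqrt S := rfl
  have hnormsq : enormR (v₁ - v₂) ^ 2 = S := by
    rw [hnorm, Real.sq_sqrt hS0]
  constructor
  · rw [hnormsq, hdiv, hS]
    refine Finset.sum_le_sum fun i _ => ?_
    have := sq_div_two_le_cosh_sub_one (d i)
    linarith
  · rw [hdiv, hnorm]
    -- each cosh (d i) = cosh (sqrt (d i ^ 2))
    have hcosh : ∀ i : Fin m, Real.cosh (d i) = Real.cosh (Real.sqrt (d i ^ 2)) := by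
      intro i
      rw [Real.sqrt_sq_eq_abs, Real.cosh_abs]
    -- HasSum for each coordinate
    have hterm : ∀ i : Fin m,
        HasSum (fun n => (d i ^ 2) ^ (n + 1) / (Nat.factorial (2 * (n + 1)) : ℝ))
          (Real.cosh (Real.sqrt (d i ^ 2)) - 1) := by
      intro i
      have h := hasSum_cosh_sub_one (Real.sqrt (d i ^ 2))
      refine h.congr_fun fun n => ?_
      rw [pow_mul, Real.sq_sqrt (sq_nonneg _)]
    have hsum : HasSum (fun n => ∑ i, (d i ^ 2) ^ (n + 1) / (Nat.factorial (2 * (n + 1)) : ℝ))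
        (∑ i, (Real.cosh (Real.sqrt (d i ^ 2)) - 1)) :=
      hasSum_sum fun i _ => hterm i
    have hbig : HasSum (fun n => S ^ (n + 1) / (Nat.factorial (2 * (n + 1)) : ℝ))
        (Real.cosh (Real.sqrt S) - 1) := by
      have h := hasSum_cosh_sub_one (Real.sqrt S)
      refine h.congr_fun fun n => ?_
      rw [pow_mul, Real.sq_sqrt hS0]
    have hle : ∑ i, (Real.cosh (Real.sqrt (d i ^ 2)) - 1)
        ≤ Real.cosh (Real.sqrt S) - 1 := by
      refine hasSum_le (fun n => ?_) hsum hbig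
      rw [← Finset.sum_div]
      apply div_le_div_of_nonneg_right ?_ (by positivity)
      · calc ∑ i, (d i ^ 2) ^ (n + 1) ≤ ∑ i, (d i ^ 2) * S ^ n := by
              refine Finset.sum_le_sum fun i _ => ?_
              rw [pow_succ, mul_comm]
              exact mul_le_mul_of_nonneg_left
                (pow_le_pow_left₀ (sq_nonneg _)
                  (Finset.single_le_sum (fun j _ => sq_nonneg (d j)) (Finset.mem_univ i)) n)
                (sq_nonneg _)
          _ = S ^ (n + 1) := by rw [← Finset.sum_mul, ← hS, pow_succ, mul_comm]
    calc ∑ i, 2 * (Real.cosh (d i) - 1)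
        = 2 * ∑ i, (Real.cosh (Real.sqrt (d i ^ 2)) - 1) := by
          rw [Finset.mul_sum]; exact Finset.sum_congr rfl fun i _ => by rw [hcosh i]
      _ ≤ 2 * (Real.cosh (Real.sqrt S) - 1) := by linarith [hle]
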